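/- Let q₀, q₁, q₂ : ℕ → ℕ be the queue lengths of three multiplexers in a group, evolving by qᵢ(t) = max(qᵢ(t-1) + mᵢ(t) - 1, 0) where mᵢ(t) ∈ ℕ are arrivals distributed round-robin (so that at every time t, letting k(t) be the index of the last-used multiplexer mod 3, m_{k(t)}(t) ≥ m_{(k(t)-1) mod 3}(t) ≥ m_{(k(t)-2) mod 3}(t) and m_{k(t)}(t) - m_{(k(t)-2) mod 3}(t) ≤ 1, with k(t) determined by the cumulative arrival count mod 3). Starting from q₀(0) = q₁(0) = q₂(0) = 0, for all t: q_{k(t)}(t) ≥ q_{(k(t)-1) mod 3}(t) ≥ q_{(k(t)-2) mod 3}(t) and q_{k(t)}(t) - q_{(k(t)-2) mod 3}(t) ≤ 1. -/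

import Mathlib

lemma fin3_sum (κ : Fin 3) (f : Fin 3 → ℕ) :
    ∑ i, f i = f κ + f (κ - 1) + f (κ - 2) := by
  have h0 : κ = 0 ∨ κ = 1 ∨ κ = 2 := by revert κ; decide
  rcases h0 with h | h | h <;> subst h <;>
    simp only [Fin.sum_univ_three,
      show (0:Fin 3) - 1 = 2 by decide, show (0:Fin 3) - 2 = 1 by decide,
      show (1:Fin 3) - 1 = 0 by decide, show (1:Fin 3) - 2 = 2 by decide,
      show (2:Fin 3) - 1 = 1 by decide, show (2:Fin 3) - 2 = 0 by decide] <;> ring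

open Fin.NatCast in
lemma fin3_cast (a r : ℕ) : ((3*a + r : ℕ) : Fin 3) = (r : Fin 3) := by
  open Fin.CommRing in rw [Nat.cast_add, Nat.cast_mul, show ((3:ℕ):Fin 3) = 0 by decide, zero_mul, zero_add]

open Fin.NatCast in
/-- Lemma 6: under round-robin assignment of arrivals to three non-idling multiplexers,
the queue lengths stay balanced (differ by at most one) and are ordered cyclically
according to the last input used. Here `m i t` is the number of arrivals to multiplexer
`i` at time `t ≥ 1`, `k t` the cumulative arrival count mod 3, and the queues evolve by
`q i t = max (q i (t-1) + m i t - 1) 0` (natural subtraction). -/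
theorem round_robin_balance (m : Fin 3 → ℕ → ℕ) (q : Fin 3 → ℕ → ℕ) (k : ℕ → Fin 3)
    (hk : ∀ t, k t = ((∑ s ∈ Finset.Icc 1 t, ∑ i, m i s : ℕ) : Fin 3))
    (hq0 : ∀ i, q i 0 = 0)
    (hq : ∀ i t, 1 ≤ t → q i t = q i (t-1) + m i t - 1)
    (hm_ord : ∀ t, 1 ≤ t →
      m (k t - 2) t ≤ m (k t - 1) t ∧ m (k t - 1) t ≤ m (k t) t)
    (hm_bal : ∀ t, 1 ≤ t → m (k t) t ≤ m (k t - 2) t + 1) :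
    ∀ t, (q (k t - 2) t ≤ q (k t - 1) t ∧ q (k t - 1) t ≤ q (k t) t) ∧
      q (k t) t ≤ q (k t - 2) t + 1 := by
  intro t
  induction t with
  | zero => simp [hq0]
  | succ n ih =>
    set κ := k (n+1) with hκ
    have ht1 : 1 ≤ n + 1 := by omega
    have hsum : (∑ s ∈ Finset.Icc 1 (n+1), ∑ i, m i s)
        = (∑ s ∈ Finset.Icc 1 n, ∑ i, m i s) + ∑ i, m i (n+1) :=
      Finset.sum_Icc_succ_top (by omega) _
    have hkrel : κ = k n + ((∑ i, m i (n+1) : ℕ) : Fin 3) := by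
      rw [hκ, hk (n+1), hk n, hsum]; push_cast; ring
    have hsum3 : (∑ i, m i (n+1)) = m κ (n+1) + m (κ-1) (n+1) + m (κ-2) (n+1) :=
      fin3_sum κ _
    obtain ⟨hab, hbc⟩ := hm_ord (n+1) ht1
    have hbal := hm_bal (n+1) ht1
    rw [← hκ] at hab hbc hbal
    have hqs : ∀ i, q i (n+1) = q i n + m i (n+1) - 1 := by
      intro i
      have := hq i (n+1) ht1
      simpa using this
    -- case on extra arrivals
    have hcases : (m κ (n+1) = m (κ-2) (n+1) ∧ m (κ-1) (n+1) = m (κ-2) (n+1))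
        ∨ (m κ (n+1) = m (κ-2) (n+1) + 1 ∧ m (κ-1) (n+1) = m (κ-2) (n+1))
        ∨ (m κ (n+1) = m (κ-2) (n+1) + 1 ∧ m (κ-1) (n+1) = m (κ-2) (n+1) + 1) := by
      omega
    rcases hcases with ⟨hc, hb⟩ | ⟨hc, hb⟩ | ⟨hc, hb⟩
    · -- extra = 0
      have hkn : k n = κ := by
        have : ((∑ i, m i (n+1) : ℕ) : Fin 3) = 0 := by
          rw [hsum3, hc, hb, show m (κ-2) (n+1) + m (κ-2) (n+1) + m (κ-2) (n+1)
            = 3 * m (κ-2) (n+1) + 0 by ring, fin3_cast, Nat.cast_zero]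
        rw [hkrel, this, add_zero]
      rw [hkn] at ih
      rw [hqs κ, hqs (κ-1), hqs (κ-2)]
      omega
    · -- extra = 1
      have hkn : k n = κ - 1 := by
        have : ((∑ i, m i (n+1) : ℕ) : Fin 3) = 1 := by
          rw [hsum3, hc, hb, show m (κ-2) (n+1) + 1 + m (κ-2) (n+1) + m (κ-2) (n+1)
            = 3 * m (κ-2) (n+1) + 1 by ring, fin3_cast, Nat.cast_one]
        rw [hkrel, this]; open Fin.CommRing in ring
      have e1 : κ - 1 - 1 = κ - 2 := by open Fin.CommRing in ring
      have e2 : κ - 1 - 2 = κ := by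
        have : ∀ x : Fin 3, x - 1 - 2 = x := by decide
        exact this κ
      rw [hkn, e1, e2] at ih
      rw [hqs κ, hqs (κ-1), hqs (κ-2)]
      omega
    · -- extra = 2
      have hkn : k n = κ - 2 := by
        have : ((∑ i, m i (n+1) : ℕ) : Fin 3) = 2 := by
          rw [hsum3, hc, hb, show m (κ-2) (n+1) + 1 + (m (κ-2) (n+1) + 1) + m (κ-2) (n+1)
            = 3 * m (κ-2) (n+1) + 2 by ring, fin3_cast, Nat.cast_ofNat]
        rw [hkrel, this]; open Fin.CommRing in ring
      have e1 : κ - 2 - 1 = κ := by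
        have : ∀ x : Fin 3, x - 2 - 1 = x := by decide
        exact this κ
      have e2 : κ - 2 - 2 = κ - 1 := by
        have : ∀ x : Fin 3, x - 2 - 2 = x - 1 := by decide
        exact this κ
      rw [hkn, e1, e2] at ih
      rw [hqs κ, hqs (κ-1), hqs (κ-2)]
      omega
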